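/- For any sequence A[0..n−1] over alphabet [σ] and any index j with 0 ≤ j ≤ n−1, with τ = j mod σ, t = ⌊j/σ⌋, and c = A[j], the partial rank satisfies rank'(A, j) = select_0(B_c, t) − (t−1) + P_τ[t], where B_c is the chunked unary bitvector for symbol c (as above, with chunk length σ) and P_τ[t] = rank'(A_t, τ) is the partial rank of position τ within chunk A_t. -/
import Mathlib

/-- Indices of the `0`-bits of a bitvector (`false` = 0-bit, `true` = 1-bit). -/
def zeroIndices (l : List Bool) : List ℕ :=
  (List.range l.length).filter (fun i => l.getD i true = false)

/-- `select0 l t`: the (0-based) index of the `t`-th `0`-bit of `l`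
(`t` counted 1-based), with the convention `select0 l 0 = 0`. -/
def select0 (l : List Bool) (t : ℕ) : ℕ :=
  if t = 0 then 0 else (zeroIndices l).getD (t - 1) 0

/-- Number of occurrences of symbol `c` in the `k`-th chunk (of length `σ`) of `A`. -/
def chunkOcc (A : ℕ → ℕ) (σ c k : ℕ) : ℕ :=
  ((List.range σ).filter (fun i => A (k * σ + i) = c)).length

/-- The bitvector `B_c = 1^{m₀} 0 1^{m₁} 0 ⋯ 1^{m_{nchunks-1}} 0`, where `m_k`
is the number of occurrences of `c` in chunk `k` of `A`. -/
def bvec (A : ℕ → ℕ) (σ c nchunks : ℕ) : List Bool :=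
  (List.range nchunks).flatMap
    (fun k => List.replicate (chunkOcc A σ c k) true ++ [false])

lemma zeroIndices_append (l₁ l₂ : List Bool) :
    zeroIndices (l₁ ++ l₂) = zeroIndices l₁ ++ (zeroIndices l₂).map (l₁.length + ·) := by
  unfold zeroIndices
  rw [List.length_append, List.range_add, List.filter_append, List.filter_map]
  congr 1
  · apply List.filter_congr
    intro i hi
    simp only [List.mem_range] at hi
    rw [List.getD_append _ _ _ _ hi]
  · congr 1
    apply List.filter_congr
    intro i hi
    simp only [Function.comp]
    rw [List.getD_append_right _ _ _ _ (Nat.le_add_right _ _), Nat.add_sub_cancel_left]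

lemma zeroIndices_block (m : ℕ) :
    zeroIndices (List.replicate m true ++ [false]) = [m] := by
  have h1 : zeroIndices (List.replicate m true) = [] := by
    unfold zeroIndices
    rw [List.filter_eq_nil_iff]
    intro i hi
    simp only [List.mem_range, List.length_replicate] at hi
    have hlen : i < (List.replicate m true).length := by simpa using hi
    simp [List.getD_eq_getElem _ _ hlen]
  have h2 : zeroIndices [false] = [0] := by decide
  rw [zeroIndices_append, h1, h2]
  simp

lemma bvec_length (A : ℕ → ℕ) (σ c N : ℕ) :
    (bvec A σ c N).length = (∑ k ∈ Finset.range N, chunkOcc A σ c k) + N := by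
  induction N with
  | zero => simp [bvec]
  | succ N ih =>
    rw [bvec, List.range_succ, List.flatMap_append, List.length_append, ← bvec, ih,
      Finset.sum_range_succ]
    simp
    ring

lemma zeroIndices_bvec (A : ℕ → ℕ) (σ c N : ℕ) :
    zeroIndices (bvec A σ c N)
      = (List.range N).map (fun t => (∑ k ∈ Finset.range (t + 1), chunkOcc A σ c k) + t) := by
  induction N with
  | zero => simp [bvec, zeroIndices]
  | succ N ih =>
    rw [bvec, List.range_succ, List.flatMap_append, ← bvec, zeroIndices_append, ih]
    simp only [List.flatMap_cons, List.flatMap_nil, List.append_nil, zeroIndices_block,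
      List.map_append]
    congr 1
    simp [bvec_length, Finset.sum_range_succ]
    ring

lemma filter_len_congr {p q : ℕ → Bool} (l : List ℕ) (h : ∀ i ∈ l, p i = q i) :
    (l.filter p).length = (l.filter q).length := by
  rw [List.filter_congr h]

lemma rank_chunks (A : ℕ → ℕ) (σ c : ℕ) (t : ℕ) :
    ((List.range (t * σ)).filter (fun i => A i = c)).length
      = ∑ k ∈ Finset.range t, chunkOcc A σ c k := by
  induction t with
  | zero => simp
  | succ t ih =>
    have h : (t + 1) * σ = t * σ + σ := by ring
    rw [h, List.range_add, List.filter_append, List.length_append, ih,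
      Finset.sum_range_succ, List.filter_map, List.length_map]
    congr 1

/-- Partial rank identity: for a sequence `A[0..n-1]` over `[σ]` divided into
chunks of length `σ` (with `σ ∣ n`) and any position `j < n`, with
`t = ⌊j/σ⌋`, `τ = j mod σ`, `c = A j`, the partial rank (number of occurrences
of `A j` in `A[0..j]`) satisfies
`rank'(A, j) = select₀(B_c, t) − (t − 1) + P_τ[t]`,
where `P_τ[t] = rank'(A_t, τ)` is the partial rank within chunk `t`. -/
theorem stmt3 (σ n : ℕ) (hσ : 0 < σ) (hdvd : σ ∣ n) (A : ℕ → ℕ)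
    (j : ℕ) (hj : j < n) :
    ((List.range (j + 1)).filter (fun i => A i = A j)).length
      = select0 (bvec A σ (A j) (n / σ)) (j / σ) - (j / σ - 1)
        + ((List.range (j % σ + 1)).filter
            (fun i => A (j / σ * σ + i) = A j)).length := by
  set c := A j with hc
  set t := j / σ with ht
  set τ := j % σ with hτ
  have hjd : j = t * σ + τ := by rw [ht, hτ, Nat.mul_comm, Nat.div_add_mod]
  -- left side split
  have hsplit : ((List.range (j + 1)).filter (fun i => A i = c)).length
      = (∑ k ∈ Finset.range t, chunkOcc A σ c k)
        + ((List.range (τ + 1)).filter (fun i => A (t * σ + i) = c)).length := by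
    have : j + 1 = t * σ + (τ + 1) := by omega
    rw [this, List.range_add, List.filter_append, List.length_append, rank_chunks,
      List.filter_map, List.length_map]
    congr 1
  -- select side
  have htlt : t < n / σ := by
    rw [ht]
    exact Nat.div_lt_div_of_lt_of_dvd hdvd hj
  have hsel : select0 (bvec A σ c (n / σ)) t - (t - 1)
      = ∑ k ∈ Finset.range t, chunkOcc A σ c k := by
    rcases Nat.eq_zero_or_pos t with h0 | hpos
    · simp [h0, select0]
    · rw [select0, if_neg (Nat.pos_iff_ne_zero.mp hpos), zeroIndices_bvec]
      have hlt : t - 1 < (List.range (n / σ)).length := by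
        rw [List.length_range]; omega
      rw [List.getD_eq_getElem _ _ (by simpa using hlt)]
      simp only [List.getElem_map, List.getElem_range]
      have : t - 1 + 1 = t := by omega
      rw [this]
      omega
  rw [hsplit, hsel]
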